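/- Let 0 < ε < a < 4 be reals and let F, G be nonempty finite families with densities p(F), p(G) ∈ (0,1], and let F₁, F₀, G₁, G₀, G₀∪G₁, G₀∩G₁ satisfy p(F₁)+p(F₀)=2p(F), p(G₀∪G₁)+p(G₀∩G₁)=2p(G). Suppose p(F₁)·p(G₁) ≤ a·p(F)·p(G), p(G₀∪G₁)·p(F₀) ≤ a·p(F)·p(G), p(G₀∩G₁)·p(F₁) ≤ ε·p(F)·p(G), and p(F₁) ≤ √a·p(F) with √a < 2. If 2 - a/(2-√a) ≥ √ε, then p(F₁) ≤ √ε·p(F). -/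

import Mathlib

/-- The Claim in the proof of Theorem 2 of Mubayi–Rödl, "Specified Intersections". -/
theorem stmt_1 (ε a pF pG pF1 pF0 pG1 pGu pGi : ℝ)
    (hε : 0 < ε) (hεa : ε < a) (ha4 : a < 4)
    (hpF : 0 < pF) (hpF1' : pF ≤ 1) (hpG : 0 < pG) (hpG1' : pG ≤ 1)
    (hF1 : 0 ≤ pF1) (hF0 : 0 < pF0) (hG1 : 0 ≤ pG1) (hGu : 0 ≤ pGu) (hGi : 0 ≤ pGi)
    (hFsum : pF1 + pF0 = 2 * pF)
    (hGsum : pGu + pGi = 2 * pG)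
    (h1 : pF1 * pG1 ≤ a * pF * pG)
    (h2 : pGu * pF0 ≤ a * pF * pG)
    (h3 : pGi * pF1 ≤ ε * pF * pG)
    (h4 : pF1 ≤ Real.sqrt a * pF)
    (h5 : Real.sqrt a < 2)
    (h6 : 2 - a / (2 - Real.sqrt a) ≥ Real.sqrt ε) :
    pF1 ≤ Real.sqrt ε * pF := by
  have hsa : 0 < 2 - Real.sqrt a := by linarith
  have hse : 0 < Real.sqrt ε := Real.sqrt_pos.mpr hε
  have hF0' : (2 - Real.sqrt a) * pF ≤ pF0 := by nlinarith
  have hGu2 : pGu * (2 - Real.sqrt a) ≤ a * pG := by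
    nlinarith [mul_le_mul_of_nonneg_left hF0' hGu]
  have h6' : 2 * (2 - Real.sqrt a) - a ≥ Real.sqrt ε * (2 - Real.sqrt a) := by
    have := (div_le_iff₀ hsa).mp (by linarith : a / (2 - Real.sqrt a) ≤ 2 - Real.sqrt ε)
    nlinarith
  have hGi' : Real.sqrt ε * pG ≤ pGi := by nlinarith
  have hεs : Real.sqrt ε * Real.sqrt ε = ε := Real.mul_self_sqrt hε.le
  have heq : ε * pF * pG = Real.sqrt ε * (Real.sqrt ε * (pF * pG)) := by
    linear_combination pF * pG * hεs.symm
  have key : Real.sqrt ε * pG * pF1 ≤ Real.sqrt ε * (Real.sqrt ε * (pF * pG)) := by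
    have := mul_le_mul_of_nonneg_right hGi' hF1
    linarith
  have := (mul_le_mul_iff_right₀ hse).mp (by nlinarith [mul_pos hse hpG] : Real.sqrt ε * (pG * pF1) ≤ Real.sqrt ε * (Real.sqrt ε * (pF * pG)))
  nlinarith
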